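/- (Remark: Frobenius-norm counterexample.) Let K be the 4×4 symmetric matrix with rows (1.0, 0.7, 0.9, 0.4), (0.7, 1.0, 0.6, 0.6), (0.9, 0.6, 1.0, 0.6), (0.4, 0.6, 0.6, 1.0). Then K is positive semidefinite. Let C be the 4×2 matrix consisting of the first two columns of K and let W be the leading 2×2 principal submatrix of K, so W = [[1, 0.7], [0.7, 1]]. Let G_nys = C M Cᵀ, where M = (1/3.4)·[[1,1],[1,1]] is the pseudo-inverse of the best rank-1 approximation of W, and let G_opt be any best rank-1 approximation of CW⁻¹Cᵀ in the Frobenius norm (a 4×4 matrix of rank ≤ 1 minimizing ‖CW⁻¹Cᵀ − G‖_F). Then ‖K − G_nys‖_F < ‖K − G_opt‖_F; that is, the standard Nyström rank-1 approximation is strictly better than the modified one in Frobenius norm for this matrix. -/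

import Mathlib

open Matrix

/-- Frobenius norm of a real matrix: ‖A‖_F = sqrt(trace(Aᵀ A)). -/
noncomputable def frobNorm {α β : Type*} [Fintype α] [Fintype β] (A : Matrix α β ℝ) : ℝ :=
  Real.sqrt (Matrix.trace (Aᵀ * A))

/-- The 4×4 kernel matrix of the Frobenius-norm counterexample. -/
def K10 : Matrix (Fin 4) (Fin 4) ℝ :=
  !![1, 0.7, 0.9, 0.4;
     0.7, 1, 0.6, 0.6;
     0.9, 0.6, 1, 0.6;
     0.4, 0.6, 0.6, 1]

/-- C consists of the first two columns of K. -/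
def C10 : Matrix (Fin 4) (Fin 2) ℝ :=
  !![1, 0.7;
     0.7, 1;
     0.9, 0.6;
     0.4, 0.6]

/-- W is the leading 2×2 principal submatrix of K. -/
def W10 : Matrix (Fin 2) (Fin 2) ℝ := !![1, 0.7; 0.7, 1]

/-- M = (1/3.4)·[[1,1],[1,1]] is the pseudo-inverse of the best rank-1 approximation of W. -/
noncomputable def M10 : Matrix (Fin 2) (Fin 2) ℝ := (3.4 : ℝ)⁻¹ • !![1, 1; 1, 1]

open Finset
set_option maxHeartbeats 1000000

noncomputable def frobSq {α β : Type*} [Fintype α] [Fintype β] (A : Matrix α β ℝ) : ℝ :=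
  ∑ i, ∑ j, (A i j)^2

lemma frobNorm_eq {α β : Type*} [Fintype α] [Fintype β] (A : Matrix α β ℝ) :
    frobNorm A = Real.sqrt (frobSq A) := by
  unfold frobNorm frobSq
  congr 1
  simp only [Matrix.trace, Matrix.diag, Matrix.mul_apply, Matrix.transpose_apply]
  rw [Finset.sum_comm]
  exact Finset.sum_congr rfl fun i _ => Finset.sum_congr rfl fun j _ => by ring

lemma frobSq_nonneg {α β : Type*} [Fintype α] [Fintype β] (A : Matrix α β ℝ) : 0 ≤ frobSq A :=
  Finset.sum_nonneg fun _ _ => Finset.sum_nonneg fun _ _ => sq_nonneg _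

lemma frobSq_le_of_frobNorm_le {α β : Type*} [Fintype α] [Fintype β]
    {A B : Matrix α β ℝ} (h : frobNorm A ≤ frobNorm B) : frobSq A ≤ frobSq B := by
  rw [frobNorm_eq, frobNorm_eq] at h
  exact (Real.sqrt_le_sqrt_iff (frobSq_nonneg B)).mp h

lemma frobNorm_lt_of_frobSq_lt {α β : Type*} [Fintype α] [Fintype β]
    {A B : Matrix α β ℝ} (h : frobSq A < frobSq B) : frobNorm A < frobNorm B := by
  rw [frobNorm_eq, frobNorm_eq]
  exact Real.sqrt_lt_sqrt (frobSq_nonneg A) h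

lemma rank_le_one_factor (G : Matrix (Fin 4) (Fin 4) ℝ) (h : G.rank ≤ 1) :
    ∃ x y : Fin 4 → ℝ, ∀ i j, G i j = x i * y j := by
  rw [Matrix.rank] at h
  obtain ⟨v, hv⟩ := finrank_le_one_iff.mp h
  choose c hc using fun j => hv ⟨G *ᵥ Pi.single j 1, LinearMap.mem_range_self _ _⟩
  refine ⟨fun i => (v : Fin 4 → ℝ) i, c, fun i j => ?_⟩
  have h1 := congrArg Subtype.val (hc j)
  have h2 := congrFun h1 i
  simp only [Submodule.coe_smul, Pi.smul_apply, smul_eq_mul] at h2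
  have h3 : (G *ᵥ Pi.single j 1) i = G i j := by
    simp [Matrix.mulVec_single]
  rw [mul_comm]
  show G i j = c j * (v : Fin 4 → ℝ) i
  rw [h2, h3]

lemma rank_vecMulVec_le (x y : Fin 4 → ℝ) : (Matrix.vecMulVec x y).rank ≤ 1 := by
  rw [Matrix.vecMulVec_eq Unit]
  exact (Matrix.rank_mul_le_left _ _).trans
    ((Matrix.rank_le_card_width _).trans (by simp))



lemma dsum {n : Type*} [Fintype n] (f g : n → ℝ) :
    ∑ i, ∑ j, f i * g j = (∑ i, f i) * (∑ j, g j) :=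
  (Finset.sum_mul_sum _ _ _ _).symm

lemma key {n : Type*} [Fintype n] (u1 u2 x y : n → ℝ) (l1 l2 : ℝ)
    (hl2 : 0 < l2) (hl : l2 < l1)
    (h11 : ∑ i, u1 i * u1 i = 1) (h22 : ∑ i, u2 i * u2 i = 1)
    (h12 : ∑ i, u1 i * u2 i = 0)
    (hle : (∑ i, ∑ j, (l1 * (u1 i * u1 j) + l2 * (u2 i * u2 j) - x i * y j)^2) ≤ l2^2) :
    ∀ i j, x i * y j = l1 * (u1 i * u1 j) := by
  set c1 := ∑ i, u1 i * x i with hc1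
  set c2 := ∑ i, u2 i * x i with hc2
  set d1 := ∑ i, u1 i * y i with hd1
  set d2 := ∑ i, u2 i * y i with hd2
  set X := ∑ i, x i * x i with hX
  set Y := ∑ i, y i * y i with hY
  set P := ∑ i, (x i - c1 * u1 i - c2 * u2 i)^2 with hPdef
  set Q := ∑ i, (y i - d1 * u1 i - d2 * u2 i)^2 with hQdef
  have hP0 : 0 ≤ P := Finset.sum_nonneg fun _ _ => sq_nonneg _
  have hQ0 : 0 ≤ Q := Finset.sum_nonneg fun _ _ => sq_nonneg _
  -- Bessel identities
  have hPX : P = X - c1^2 - c2^2 := by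
    rw [hPdef]
    have : ∀ i ∈ Finset.univ, (x i - c1 * u1 i - c2 * u2 i)^2 =
        x i * x i - (2*c1) * (u1 i * x i) - (2*c2) * (u2 i * x i)
        + c1^2 * (u1 i * u1 i) + (2*(c1*c2)) * (u1 i * u2 i) + c2^2 * (u2 i * u2 i) :=
      fun i _ => by ring
    rw [Finset.sum_congr rfl this]
    simp only [Finset.sum_add_distrib, Finset.sum_sub_distrib, ← Finset.mul_sum]
    rw [← hc1, ← hc2, ← hX, h11, h22, h12]
    ring
  have hQY : Q = Y - d1^2 - d2^2 := by
    rw [hQdef]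
    have : ∀ i ∈ Finset.univ, (y i - d1 * u1 i - d2 * u2 i)^2 =
        y i * y i - (2*d1) * (u1 i * y i) - (2*d2) * (u2 i * y i)
        + d1^2 * (u1 i * u1 i) + (2*(d1*d2)) * (u1 i * u2 i) + d2^2 * (u2 i * u2 i) :=
      fun i _ => by ring
    rw [Finset.sum_congr rfl this]
    simp only [Finset.sum_add_distrib, Finset.sum_sub_distrib, ← Finset.mul_sum]
    rw [← hd1, ← hd2, ← hY, h11, h22, h12]
    ring
  -- expansion of the Frobenius objective
  have hF : (∑ i, ∑ j, (l1 * (u1 i * u1 j) + l2 * (u2 i * u2 j) - x i * y j)^2)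
      = l1^2 + l2^2 - 2*l1*(c1*d1) - 2*l2*(c2*d2) + X*Y := by
    have e1 : ∀ i ∈ Finset.univ, ∀ j ∈ Finset.univ,
        (l1 * (u1 i * u1 j) + l2 * (u2 i * u2 j) - x i * y j)^2 =
        (l1^2 * (u1 i * u1 i)) * (u1 j * u1 j)
        + ((l2^2 * (u2 i * u2 i)) * (u2 j * u2 j)
        + ((2*l1*l2*(u1 i * u2 i)) * (u1 j * u2 j)
        + ((x i * x i) * (y j * y j)
        - ((2*l1*(u1 i * x i)) * (u1 j * y j)
        + (2*l2*(u2 i * x i)) * (u2 j * y j))))) := fun i _ j _ => by ring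
    rw [Finset.sum_congr rfl fun i hi => Finset.sum_congr rfl (e1 i hi)]
    simp only [Finset.sum_add_distrib, Finset.sum_sub_distrib]
    rw [dsum, dsum, dsum, dsum, dsum, dsum]
    simp only [← Finset.mul_sum]
    rw [← hc1, ← hc2, ← hd1, ← hd2, ← hX, ← hY, h11, h22, h12]
    ring
  rw [hF] at hle
  set s := c1 * d1 with hs
  set t := c2 * d2 with ht
  have hXY : X * Y = s^2 + t^2 + (c1*d2)^2 + (c2*d1)^2
      + (P*(d1^2+d2^2) + Q*(c1^2+c2^2) + P*Q) := by
    have hXe : X = c1^2 + c2^2 + P := by rw [hPX]; ring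
    have hYe : Y = d1^2 + d2^2 + Q := by rw [hQY]; ring
    rw [hXe, hYe, hs, ht]; ring
  rw [hXY] at hle
  -- abs bookkeeping
  have habs : 2 * (|s| * |t|) ≤ (c1*d2)^2 + (c2*d1)^2 := by
    have h1 : |s| * |t| = |c1*d2| * |c2*d1| := by
      rw [← abs_mul, ← abs_mul]; congr 1; rw [hs, ht]; ring
    nlinarith [sq_nonneg (|c1*d2| - |c2*d1|), sq_abs (c1*d2), sq_abs (c2*d1),
      abs_nonneg (c1*d2), abs_nonneg (c2*d1)]
  have hd12 : (0:ℝ) ≤ d1^2 + d2^2 := by positivity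
  have hc12 : (0:ℝ) ≤ c1^2 + c2^2 := by positivity
  have hr1 : 0 ≤ P*(d1^2+d2^2) := mul_nonneg hP0 hd12
  have hr2 : 0 ≤ Q*(c1^2+c2^2) := mul_nonneg hQ0 hc12
  have hr3 : 0 ≤ P*Q := mul_nonneg hP0 hQ0
  have hrest : 0 ≤ P*(d1^2+d2^2) + Q*(c1^2+c2^2) + P*Q := by linarith
  have hsabs := le_abs_self s
  have htabs := le_abs_self t
  have hsabs0 := abs_nonneg s
  have htabs0 := abs_nonneg t
  -- master bound: everything squeezed
  have hmain : l1^2 + l2^2 - 2*l1*s - 2*l2*t + (s^2 + t^2 + 2 * (|s| * |t|)) ≤ l2^2 := by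
    linarith [hle, habs, hrest]
  have hident : l1^2 + l2^2 - 2*l1*s - 2*l2*t + (s^2 + t^2 + 2 * (|s| * |t|))
      = l2^2 + (l1 - |s| - |t|)^2 + 2*l1*(|s| - s) + 2*l2*(|t| - t) + 2*(l1 - l2)*|t| := by
    have h1 : |s|^2 = s^2 := sq_abs s
    have h2 : |t|^2 = t^2 := sq_abs t
    linear_combination -h1 - h2
  rw [hident] at hmain
  have hl1pos : 0 < l1 := lt_trans hl2 hl
  have hp1 : 0 ≤ 2*l1*(|s| - s) := by
    have := mul_nonneg hl1pos.le (sub_nonneg.mpr hsabs); linarith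
  have hp2 : 0 ≤ 2*l2*(|t| - t) := by
    have := mul_nonneg hl2.le (sub_nonneg.mpr htabs); linarith
  have hp3 : 0 ≤ 2*(l1 - l2)*|t| := by
    have := mul_nonneg (sub_nonneg.mpr hl.le) htabs0; linarith
  have hsq := sq_nonneg (l1 - |s| - |t|)
  have hb0 : |t| = 0 := by
    have h4 : (l1 - l2) * |t| ≤ 0 := by linarith
    by_contra hne
    have h5 : 0 < |t| := lt_of_le_of_ne htabs0 (Ne.symm hne)
    have h6 := mul_pos (sub_pos.mpr hl) h5
    linarith
  have ht0 : t = 0 := abs_eq_zero.mp hb0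
  have hsa : s = |s| := by
    have h4 : 2*l1*(|s| - s) ≤ 0 := by linarith
    by_contra hne
    have h5 : 0 < |s| - s := lt_of_le_of_ne (sub_nonneg.mpr hsabs) (fun hh => hne (by linarith))
    have h6 := mul_pos hl1pos h5
    linarith
  have hsl1 : s = l1 := by
    have h4 : (l1 - |s| - |t|)^2 ≤ 0 := by linarith
    have h5 : (l1 - |s| - |t|)^2 = 0 := le_antisymm h4 hsq
    have h6 : l1 - |s| - |t| = 0 := pow_eq_zero_iff (n := 2) (by norm_num) |>.mp h5
    rw [hb0] at h6; linarith
  rw [hsl1, ht0] at hle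
  -- now squeeze the remaining nonnegative pieces to zero
  have hle2 : (c1*d2)^2 + (c2*d1)^2 + (P*(d1^2+d2^2) + Q*(c1^2+c2^2) + P*Q) ≤ 0 := by
    linarith [hle]
  have hu0 : c1 * d2 = 0 := by
    have h4 : (c1*d2)^2 ≤ 0 := by linarith [sq_nonneg (c2*d1), hr1, hr2, hr3]
    exact pow_eq_zero_iff (n := 2) (by norm_num) |>.mp (le_antisymm h4 (sq_nonneg _))
  have hv0 : c2 * d1 = 0 := by
    have h4 : (c2*d1)^2 ≤ 0 := by linarith [sq_nonneg (c1*d2), hr1, hr2, hr3]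
    exact pow_eq_zero_iff (n := 2) (by norm_num) |>.mp (le_antisymm h4 (sq_nonneg _))
  have hPd : P * (d1^2 + d2^2) = 0 := by
    have h4 : P * (d1^2+d2^2) ≤ 0 := by linarith [sq_nonneg (c1*d2), sq_nonneg (c2*d1), hr2, hr3]
    exact le_antisymm h4 hr1
  have hQc : Q * (c1^2 + c2^2) = 0 := by
    have h4 : Q * (c1^2+c2^2) ≤ 0 := by linarith [sq_nonneg (c1*d2), sq_nonneg (c2*d1), hr1, hr3]
    exact le_antisymm h4 hr2
  have hl1pos' : 0 < l1 := hl1pos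
  have hsd : c1 * d1 = l1 := by rw [← hs]; exact hsl1
  have hc1ne : c1 ≠ 0 := by
    intro h; rw [h, zero_mul] at hsd; linarith
  have hd1ne : d1 ≠ 0 := by
    intro h; rw [h, mul_zero] at hsd; linarith
  have hd2_0 : d2 = 0 := by rcases mul_eq_zero.mp hu0 with h | h; exact absurd h hc1ne; exact h
  have hc2_0 : c2 = 0 := by rcases mul_eq_zero.mp hv0 with h | h; exact h; exact absurd h hd1ne
  have hPz : P = 0 := by
    rcases mul_eq_zero.mp hPd with h | h
    · exact h
    · exfalso; apply hd1ne
      have h5 : d1^2 = 0 := by linarith [sq_nonneg d1, sq_nonneg d2]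
      exact pow_eq_zero_iff (n := 2) (by norm_num) |>.mp h5
  have hQz : Q = 0 := by
    rcases mul_eq_zero.mp hQc with h | h
    · exact h
    · exfalso; apply hc1ne
      have h5 : c1^2 = 0 := by linarith [sq_nonneg c1, sq_nonneg c2]
      exact pow_eq_zero_iff (n := 2) (by norm_num) |>.mp h5
  have hx : ∀ i, x i = c1 * u1 i := by
    intro i
    have := (Finset.sum_eq_zero_iff_of_nonneg (fun i _ => sq_nonneg _)).mp hPz i (Finset.mem_univ i)
    have h2 : x i - c1 * u1 i - c2 * u2 i = 0 := by
      exact pow_eq_zero_iff (n := 2) (by norm_num) |>.mp this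
    rw [hc2_0] at h2; linarith [h2]
  have hy : ∀ i, y i = d1 * u1 i := by
    intro i
    have := (Finset.sum_eq_zero_iff_of_nonneg (fun i _ => sq_nonneg _)).mp hQz i (Finset.mem_univ i)
    have h2 : y i - d1 * u1 i - d2 * u2 i = 0 := by
      exact pow_eq_zero_iff (n := 2) (by norm_num) |>.mp this
    rw [hd2_0] at h2; linarith [h2]
  intro i j
  rw [hx i, hy j, ← hsd]
  ring

lemma hK : K10 = !![(1:ℝ), 7/10, 9/10, 2/5; 7/10, 1, 3/5, 3/5; 9/10, 3/5, 1, 3/5; 2/5, 3/5, 3/5, 1] := by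
  ext i j; fin_cases i <;> fin_cases j <;> norm_num [K10]

lemma hC : C10 = !![(1:ℝ), 7/10; 7/10, 1; 9/10, 3/5; 2/5, 3/5] := by
  ext i j; fin_cases i <;> fin_cases j <;> norm_num [C10]

lemma hM : M10 = !![(5:ℝ)/17, 5/17; 5/17, 5/17] := by
  ext i j; fin_cases i <;> fin_cases j <;> norm_num [M10]
noncomputable def rr : ℝ := Real.sqrt 305539

lemma hrr : rr^2 = 305539 := Real.sq_sqrt (by norm_num)

lemma rr_pos : 0 < rr := Real.sqrt_pos.mpr (by norm_num)

lemma rr_lb : 552 < rr := by nlinarith [hrr, rr_pos]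

lemma rr_ub : rr < 553 := by nlinarith [hrr, rr_pos]

noncomputable def vv1 : Fin 4 → ℝ :=
  ![1091/1020 + (7/5100)*rr, 3181/5100 + (1/510)*rr, 97/100 + (1/850)*rr, 297/850 + (1/850)*rr]

noncomputable def vv2 : Fin 4 → ℝ :=
  ![1091/1020 - (7/5100)*rr, 3181/5100 - (1/510)*rr, 97/100 - (1/850)*rr, 297/850 - (1/850)*rr]

noncomputable def NN1 : ℝ := 3972007/765000 + (110369/13005000)*rr
noncomputable def NN2 : ℝ := 3972007/765000 - (110369/13005000)*rr
noncomputable def ll1 : ℝ := (809 + rr)/510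
noncomputable def ll2 : ℝ := (809 - rr)/510
noncomputable def mm1 : ℝ := 85000/133563 - (27038500/40808705457)*rr
noncomputable def mm2 : ℝ := 85000/133563 + (27038500/40808705457)*rr
noncomputable def uu1 : Fin 4 → ℝ := fun i => vv1 i / Real.sqrt NN1
noncomputable def uu2 : Fin 4 → ℝ := fun i => vv2 i / Real.sqrt NN2

lemma hNN1 : 0 < NN1 := by have := rr_lb; have := rr_ub; unfold NN1; nlinarith
lemma hNN2 : 0 < NN2 := by have := rr_lb; have := rr_ub; unfold NN2; nlinarith
lemma hll2 : 0 < ll2 := by have := rr_ub; unfold ll2; nlinarith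
lemma hll12 : ll2 < ll1 := by have := rr_pos; unfold ll1 ll2; nlinarith

lemma hsum_vv1 : ∑ i, vv1 i * vv1 i = NN1 := by
  simp [vv1, Fin.sum_univ_four, NN1]
  linear_combination ((13/1530000 : ℝ)) * hrr

lemma hsum_vv2 : ∑ i, vv2 i * vv2 i = NN2 := by
  simp [vv2, Fin.sum_univ_four, NN2]
  linear_combination ((13/1530000 : ℝ)) * hrr

lemma hsum_vv12 : ∑ i, vv1 i * vv2 i = 0 := by
  simp [vv1, vv2, Fin.sum_univ_four]
  linear_combination ((-13/1530000 : ℝ)) * hrr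

lemma hmss1 : Real.sqrt NN1 * Real.sqrt NN1 = NN1 := Real.mul_self_sqrt hNN1.le
lemma hmss2 : Real.sqrt NN2 * Real.sqrt NN2 = NN2 := Real.mul_self_sqrt hNN2.le

lemma h11 : ∑ i, uu1 i * uu1 i = 1 := by
  have h : ∀ i ∈ Finset.univ, uu1 i * uu1 i = (vv1 i * vv1 i) / NN1 := by
    intro i _; unfold uu1; rw [div_mul_div_comm, hmss1]
  rw [Finset.sum_congr rfl h, ← Finset.sum_div, hsum_vv1, div_self hNN1.ne']

lemma h22 : ∑ i, uu2 i * uu2 i = 1 := by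
  have h : ∀ i ∈ Finset.univ, uu2 i * uu2 i = (vv2 i * vv2 i) / NN2 := by
    intro i _; unfold uu2; rw [div_mul_div_comm, hmss2]
  rw [Finset.sum_congr rfl h, ← Finset.sum_div, hsum_vv2, div_self hNN2.ne']

lemma h12 : ∑ i, uu1 i * uu2 i = 0 := by
  have h : ∀ i ∈ Finset.univ, uu1 i * uu2 i = (vv1 i * vv2 i) / (Real.sqrt NN1 * Real.sqrt NN2) := by
    intro i _; unfold uu1 uu2; rw [div_mul_div_comm]
  rw [Finset.sum_congr rfl h, ← Finset.sum_div, hsum_vv12, zero_div]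

lemma hmu1 : ll1 / NN1 = mm1 := by
  rw [div_eq_iff hNN1.ne']
  unfold ll1 NN1 mm1
  linear_combination ((351083789/62437319349210 : ℝ)) * hrr

lemma hmu2 : ll2 / NN2 = mm2 := by
  rw [div_eq_iff hNN2.ne']
  unfold ll2 NN2 mm2
  linear_combination ((351083789/62437319349210 : ℝ)) * hrr

lemma hG1 (i j : Fin 4) : ll1 * (uu1 i * uu1 j) = mm1 * (vv1 i * vv1 j) := by
  unfold uu1
  rw [div_mul_div_comm, hmss1, ← hmu1]
  ring

lemma hG2 (i j : Fin 4) : ll2 * (uu2 i * uu2 j) = mm2 * (vv2 i * vv2 j) := by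
  unfold uu2
  rw [div_mul_div_comm, hmss2, ← hmu2]
  ring

lemma hW10inv : W10⁻¹ = !![100/51, -70/51; -70/51, 100/51] := by
  have h : W10 * !![100/51, -70/51; -70/51, 100/51] = 1 := by
    ext i j
    fin_cases i <;> fin_cases j <;>
      norm_num [W10, Matrix.mul_apply, Fin.sum_univ_two, Matrix.one_apply]
  exact Matrix.inv_eq_right_inv h

lemma hAmm : ∀ i j, (C10 * W10⁻¹ * C10ᵀ) i j = mm1 * (vv1 i * vv1 j) + mm2 * (vv2 i * vv2 j) := by
  intro i j
  rw [hW10inv, hC]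
  fin_cases i <;> fin_cases j <;>
    simp [vv1, vv2, mm1, mm2, Matrix.mul_apply, Fin.sum_univ_two, Fin.sum_univ_four, Matrix.transpose_apply, Matrix.cons_val_zero, Matrix.cons_val_one, Matrix.cons_val_two, Matrix.cons_val_three, Matrix.head_cons, Matrix.vecHead, Matrix.vecTail, Function.comp]
  · linear_combination ((9321886/6243731934921 : ℝ)) * hrr
  · linear_combination ((123391/252782669430 : ℝ)) * hrr
  · linear_combination ((1685149/1224261163710 : ℝ)) * hrr
  · linear_combination ((286436/1156246654615 : ℝ)) * hrr
  · linear_combination ((123391/252782669430 : ℝ)) * hrr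
  · linear_combination ((-10316378/6243731934921 : ℝ)) * hrr
  · linear_combination ((340718/612130581855 : ℝ)) * hrr
  · linear_combination ((-1220841/1156246654615 : ℝ)) * hrr
  · linear_combination ((1685149/1224261163710 : ℝ)) * hrr
  · linear_combination ((340718/612130581855 : ℝ)) * hrr
  · linear_combination ((4380158/3468739963845 : ℝ)) * hrr
  · linear_combination ((341401/1156246654615 : ℝ)) * hrr
  · linear_combination ((286436/1156246654615 : ℝ)) * hrr
  · linear_combination ((-1220841/1156246654615 : ℝ)) * hrr
  · linear_combination ((341401/1156246654615 : ℝ)) * hrr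
  · linear_combination ((-2331752/3468739963845 : ℝ)) * hrr

lemma hAuu : ∀ i j, (C10 * W10⁻¹ * C10ᵀ) i j = ll1 * (uu1 i * uu1 j) + ll2 * (uu2 i * uu2 j) := by
  intro i j
  rw [hAmm i j, hG1, hG2]

/-- Frobenius-norm counterexample: the standard Nyström rank-1 approximation is strictly
better than the modified one in Frobenius norm for this matrix. -/
theorem stmt_10 :
    K10.PosSemidef ∧
    ∀ Gopt : Matrix (Fin 4) (Fin 4) ℝ, Gopt.rank ≤ 1 →
      (∀ G' : Matrix (Fin 4) (Fin 4) ℝ, G'.rank ≤ 1 →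
        frobNorm (C10 * W10⁻¹ * C10ᵀ - Gopt) ≤ frobNorm (C10 * W10⁻¹ * C10ᵀ - G')) →
      frobNorm (K10 - C10 * M10 * C10ᵀ) < frobNorm (K10 - Gopt) := by

  constructor
  · refine Matrix.PosSemidef.of_dotProduct_mulVec_nonneg ?_ ?_
    · show K10ᴴ = K10
      ext i j
      fin_cases i <;> fin_cases j <;> norm_num [K10, Matrix.conjTranspose_apply]
    · intro z
      have h0 := sq_nonneg (z 0 + 7/10*z 1 + 9/10*z 2 + 2/5*z 3)
      have h1 := sq_nonneg (z 1 - 1/17*z 2 + 32/51*z 3)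
      have h2 := sq_nonneg (z 2 + 11/8*z 3)
      have h3 := sq_nonneg (z 3)
      rw [hK]
      simp [dotProduct, Matrix.mulVec, star_trivial, Matrix.mul_apply, Fin.sum_univ_two, Fin.sum_univ_four, Matrix.transpose_apply, Matrix.cons_val_zero, Matrix.cons_val_one, Matrix.cons_val_two, Matrix.cons_val_three, Matrix.head_cons, Matrix.vecHead, Matrix.vecTail, Function.comp, Matrix.smul_apply, smul_eq_mul]
      nlinarith [h0, h1, h2, h3]
  · intro Gopt hrank hopt
    obtain ⟨x, y, hxy⟩ := rank_le_one_factor Gopt hrank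
    have hG'rank : (Matrix.vecMulVec (fun i => ll1 * uu1 i) uu1).rank ≤ 1 := _root_.rank_vecMulVec_le _ _
    have hopt' := hopt _ hG'rank
    have hsubentry : ∀ i j, (C10 * W10⁻¹ * C10ᵀ - Matrix.vecMulVec (fun i => ll1 * uu1 i) uu1) i j
        = ll2 * (uu2 i * uu2 j) := by
      intro i j
      rw [Matrix.sub_apply, Matrix.vecMulVec_apply, hAuu i j]
      ring
    have hfrobG' : frobSq (C10 * W10⁻¹ * C10ᵀ - Matrix.vecMulVec (fun i => ll1 * uu1 i) uu1) = ll2^2 := by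
      unfold frobSq
      rw [Finset.sum_congr rfl fun i _ => Finset.sum_congr rfl fun j _ => by
        rw [hsubentry i j]]
      have e : ∀ i ∈ Finset.univ, ∀ j ∈ Finset.univ, (ll2 * (uu2 i * uu2 j))^2
          = (ll2^2 * (uu2 i * uu2 i)) * (uu2 j * uu2 j) := fun i _ j _ => by ring
      rw [Finset.sum_congr rfl fun i hi => Finset.sum_congr rfl (e i hi), dsum]
      simp only [← Finset.mul_sum]
      rw [h22]
      ring
    have hnormG' : frobNorm (C10 * W10⁻¹ * C10ᵀ - Matrix.vecMulVec (fun i => ll1 * uu1 i) uu1) = ll2 := by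
      rw [frobNorm_eq, hfrobG']
      exact Real.sqrt_sq hll2.le
    have hle1 : frobSq (C10 * W10⁻¹ * C10ᵀ - Gopt) ≤ ll2^2 := by
      have h := frobSq_le_of_frobNorm_le hopt'
      rw [hfrobG'] at h
      exact h
    have hle2 : (∑ i, ∑ j, (ll1 * (uu1 i * uu1 j) + ll2 * (uu2 i * uu2 j) - x i * y j)^2) ≤ ll2^2 := by
      refine le_trans (le_of_eq ?_) hle1
      unfold frobSq
      refine Finset.sum_congr rfl fun i _ => Finset.sum_congr rfl fun j _ => ?_
      rw [Matrix.sub_apply, hAuu i j, hxy i j]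
    have hkey := key uu1 uu2 x y ll1 ll2 hll2 hll12 h11 h22 h12 hle2
    have hGopt : ∀ i j, Gopt i j = mm1 * (vv1 i * vv1 j) := by
      intro i j
      rw [hxy i j, hkey i j, hG1 i j]
    apply frobNorm_lt_of_frobSq_lt
    have hGn : frobSq (K10 - C10 * M10 * C10ᵀ) = 102089/115600 := by
      unfold frobSq
      rw [hK, hC, hM]
      simp [Matrix.vecMul, dotProduct, Matrix.sub_apply, Matrix.mul_apply, Fin.sum_univ_two, Fin.sum_univ_four, Matrix.transpose_apply, Matrix.cons_val_zero, Matrix.cons_val_one, Matrix.cons_val_two, Matrix.cons_val_three, Matrix.head_cons, Matrix.vecHead, Matrix.vecTail, Function.comp, Matrix.smul_apply, smul_eq_mul]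
      norm_num
    have hval : frobSq (K10 - Gopt) = 314006/65025 - (56700359/7947069390)*rr := by
      unfold frobSq
      rw [Finset.sum_congr rfl fun i _ => Finset.sum_congr rfl fun j _ => by
        rw [Matrix.sub_apply, hGopt i j]]
      rw [hK]
      simp [vv1, mm1, Matrix.mul_apply, Fin.sum_univ_two, Fin.sum_univ_four, Matrix.transpose_apply, Matrix.cons_val_zero, Matrix.cons_val_one, Matrix.cons_val_two, Matrix.cons_val_three, Matrix.head_cons, Matrix.vecHead, Matrix.vecTail, Function.comp, Matrix.smul_apply, smul_eq_mul]
      linear_combination ((85384847578054151/12759152996884958901900) + (151898982849559/12759152996884958901900)*rr^1 + (-137135520679/4324128186438008816400)*rr^2 + (21413210057/8819952143699623207981050)*rr^3 + (10118761/319274285744782740560400)*rr^4 + (0)*rr^5 : ℝ) * hrr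
    rw [hGn, hval]
    have := rr_ub
    linarith
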